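/- Let A be the free group of rank two with basis x, y, let C be the normal closure of y in A, and let G = {A * Ā ; C = C̄} be the double of A along C, i.e., G = ⟨x, y, x̄, ȳ | x⁻ⁱyxⁱ = x̄⁻ⁱȳx̄ⁱ for all i ∈ ℤ⟩. Then the second integral homology group H₂(G; ℤ) (group homology of G with trivial ℤ coefficients in degree 2) is not finitely generated as an abelian group. -/

import Mathlib

/-! Group homology with trivial `ℤ` coefficients, via the standard (inhomogeneous bar)
chain complex `⋯ → ℤ[G³] → ℤ[G²] → ℤ[G] → ℤ`, whose `n`-th term is the free `ℤ`-module on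
`Gⁿ` and whose differential is
`d(g₁, …, gₙ) = (g₂, …, gₙ) + Σᵢ (-1)ⁱ (g₁, …, gᵢgᵢ₊₁, …, gₙ) + (-1)ⁿ (g₁, …, gₙ₋₁)`. -/

/-- The bar differential `ℤ[G²] → ℤ[G]`: `d(g, h) = h - gh + g`. -/
noncomputable def barD2 (G : Type*) [Group G] :
    ((G × G) →₀ ℤ) →ₗ[ℤ] (G →₀ ℤ) :=
  Finsupp.lift _ ℤ _ fun x =>
    Finsupp.single x.2 1 - Finsupp.single (x.1 * x.2) 1 + Finsupp.single x.1 1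

/-- The bar differential `ℤ[G³] → ℤ[G²]`:
`d(g, h, k) = (h, k) - (gh, k) + (g, hk) - (g, h)`. -/
noncomputable def barD3 (G : Type*) [Group G] :
    ((G × G × G) →₀ ℤ) →ₗ[ℤ] ((G × G) →₀ ℤ) :=
  Finsupp.lift _ ℤ _ fun x =>
    Finsupp.single (x.2.1, x.2.2) 1 - Finsupp.single (x.1 * x.2.1, x.2.2) 1 +
      Finsupp.single (x.1, x.2.1 * x.2.2) 1 - Finsupp.single (x.1, x.2.1) 1

/-- The second integral homology group `H₂(G; ℤ)` of a group `G` (group homology with trivial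
`ℤ` coefficients), computed as `ker d₂ / im d₃` in the bar complex. -/
noncomputable abbrev H2 (G : Type*) [Group G] :=
  LinearMap.ker (barD2 G) ⧸
    Submodule.comap (LinearMap.ker (barD2 G)).subtype (LinearMap.range (barD3 G))

/-- The free group `A` on `x, y` (here `x = FreeGroup.of 0`, `y = FreeGroup.of 1`). -/
noncomputable abbrev A : Type := FreeGroup (Fin 2)

/-- `C` is the normal closure of `y` in the free group `A = F(x, y)`. -/
noncomputable def C : Subgroup A := Subgroup.normalClosure {FreeGroup.of 1}

/-- The double `G = {A * Ā ; C = C̄}` of `A` along `C`, formalized as the amalgamated free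
product (pushout) of two copies of the inclusion `C ↪ A`; this is the group
`⟨x, y, x̄, ȳ ∣ x⁻ⁱyxⁱ = x̄⁻ⁱȳx̄ⁱ (i ∈ ℤ)⟩`. -/
noncomputable abbrev DoubleG : Type := Monoid.PushoutI (fun _ : Bool => C.subtype)


section Generic

variable {Γ E : Type*} [Group Γ] [Group E]

lemma barD2_single (g h : Γ) :
    barD2 Γ (Finsupp.single (g, h) (1:ℤ)) =
      Finsupp.single h 1 - Finsupp.single (g * h) 1 + Finsupp.single g 1 := by
  simp [barD2, Finsupp.sum_single_index]

lemma barD3_single (g h k : Γ) :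
    barD3 Γ (Finsupp.single (g, h, k) (1:ℤ)) =
      Finsupp.single (h, k) 1 - Finsupp.single (g * h, k) 1 +
        Finsupp.single (g, h * k) 1 - Finsupp.single (g, h) 1 := by
  simp [barD3, Finsupp.sum_single_index]

open Classical in
/-- normalized set-theoretic section -/
noncomputable def sec (π : E →* Γ) (hπ : Function.Surjective π) : Γ → E := fun g =>
  if g = 1 then 1 else Function.surjInv hπ g

lemma sec_one (π : E →* Γ) (hπ : Function.Surjective π) : sec π hπ 1 = 1 := if_pos rfl

lemma π_sec (π : E →* Γ) (hπ : Function.Surjective π) (g : Γ) : π (sec π hπ g) = g := by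
  unfold sec
  split
  · simp [*]
  · exact Function.surjInv_eq hπ g

section
variable (π : E →* Γ) (κ : E → ℤ) (hπ : Function.Surjective π)
variable (hcen : ∀ e : E, π e = 1 → ∀ t : E, e * t = t * e)
variable (hκ : ∀ u v : E, π u = 1 → π v = 1 → κ (u * v) = κ u + κ v)

include hκ in
lemma κ_one : κ 1 = 0 := by
  have := hκ 1 1 (map_one π) (map_one π)
  simp at this; omega

/-- the 2-cocycle associated to the extension -/
noncomputable def coc : Γ → Γ → ℤ := fun g h =>
  κ (sec π hπ g * sec π hπ h * (sec π hπ (g * h))⁻¹)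

lemma cmove (a b c v : E) (hv : ∀ t : E, v * t = t * v) :
    (a * b * c⁻¹) * v = a * (v * b) * c⁻¹ := by
  calc (a * b * c⁻¹) * v = a * b * (c⁻¹ * v) := by group
    _ = a * b * (v * c⁻¹) := by rw [hv c⁻¹]
    _ = a * (v * b) * c⁻¹ := by rw [hv b]; group

lemma cswap {v : E} (hv : ∀ t : E, v * t = t * v) (a b : E) :
    a * v * b = a * b * v := by
  rw [mul_assoc, hv, ← mul_assoc]

lemma central_pair {v : E} (hv : ∀ t : E, v * t = t * v) (a b w : E) :
    (a * v) * (b * w) = (a * b) * (v * w) := by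
  calc (a * v) * (b * w) = a * (v * b) * w := by group
    _ = a * (b * v) * w := by rw [hv b]
    _ = (a * b) * (v * w) := by group

lemma central_mul {v w : E} (hv : ∀ t : E, v * t = t * v) (hw : ∀ t : E, w * t = t * w) :
    ∀ t : E, (v * w) * t = t * (v * w) := by
  intro t
  rw [mul_assoc, hw, ← mul_assoc, hv, mul_assoc]

lemma central_pow {v : E} (hv : ∀ t : E, v * t = t * v) (n : ℕ) :
    ∀ t : E, (v ^ n) * t = t * (v ^ n) := by
  intro t
  exact ((Commute.pow_left (hv t) n)).eq

lemma π_secprod (g h : Γ) : π (sec π hπ g * sec π hπ h * (sec π hπ (g * h))⁻¹) = 1 := by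
  simp only [map_mul, map_inv, π_sec]
  group

include hcen hκ in
lemma coc_identity (g h k : Γ) :
    coc π κ hπ h k + coc π κ hπ g (h * k) = coc π κ hπ g h + coc π κ hπ (g * h) k := by
  set s := sec π hπ with hs
  have hu : π (s g * s h * (s (g*h))⁻¹) = 1 := π_secprod π hπ g h
  have hv : π (s (g*h) * s k * (s (g*h*k))⁻¹) = 1 := π_secprod π hπ (g*h) k
  have hu' : π (s g * s (h*k) * (s (g*(h*k)))⁻¹) = 1 := π_secprod π hπ g (h*k)
  have hv' : π (s h * s k * (s (h*k))⁻¹) = 1 := π_secprod π hπ h k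
  have h1 : κ ((s g * s (h*k) * (s (g*(h*k)))⁻¹) * (s h * s k * (s (h*k))⁻¹))
      = κ (s g * s (h*k) * (s (g*(h*k)))⁻¹) + κ (s h * s k * (s (h*k))⁻¹) := hκ _ _ hu' hv'
  have h2 : κ ((s g * s h * (s (g*h))⁻¹) * (s (g*h) * s k * (s (g*h*k))⁻¹))
      = κ (s g * s h * (s (g*h))⁻¹) + κ (s (g*h) * s k * (s (g*h*k))⁻¹) := hκ _ _ hu hv
  have key : (s g * s (h*k) * (s (g*(h*k)))⁻¹) * (s h * s k * (s (h*k))⁻¹)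
      = (s g * s h * (s (g*h))⁻¹) * (s (g*h) * s k * (s (g*h*k))⁻¹) := by
    rw [cmove (s g) (s (h*k)) (s (g*(h*k))) _ (hcen _ hv')]
    rw [show g * h * k = g * (h * k) by group]
    group
  rw [key] at h1
  unfold coc
  rw [← hs]
  omega

/-- the linear functional on 2-chains -/
noncomputable def Phi : ((Γ × Γ) →₀ ℤ) →ₗ[ℤ] ℤ :=
  Finsupp.lift ℤ ℤ (Γ × Γ) fun p => coc π κ hπ p.1 p.2

lemma Phi_single (g h : Γ) :
    Phi π κ hπ (Finsupp.single (g, h) 1) = coc π κ hπ g h := by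
  simp [Phi, Finsupp.sum_single_index]

include hcen hκ in
lemma Phi_barD3 (w : (Γ × Γ × Γ) →₀ ℤ) : Phi π κ hπ (barD3 Γ w) = 0 := by
  have h : (Phi π κ hπ).comp (barD3 Γ) = 0 := by
    apply Finsupp.lhom_ext'
    intro x
    apply LinearMap.ext_ring
    obtain ⟨g, h, k⟩ := x
    simp only [LinearMap.comp_apply, LinearMap.zero_apply, Finsupp.lsingle_apply]
    rw [barD3_single, map_sub, map_add, map_sub, Phi_single, Phi_single, Phi_single, Phi_single]
    have := coc_identity π κ hπ hcen hκ g h k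
    omega
  exact DFunLike.congr_fun h w

end

/-- telescoping 2-chain of a word -/
noncomputable def Tch : List Γ → ((Γ × Γ) →₀ ℤ)
  | [] => 0
  | g :: L => Finsupp.single (g, L.prod) 1 + Tch L

lemma barD2_Tch (L : List Γ) :
    barD2 Γ (Tch L) =
      (L.map fun g => Finsupp.single g (1:ℤ)).sum - Finsupp.single L.prod 1 +
        Finsupp.single 1 1 := by
  induction L with
  | nil => simp [Tch]
  | cons g L ih =>
    rw [Tch, map_add, barD2_single, ih, List.map_cons, List.sum_cons, List.prod_cons]
    abel

section
variable (π : E →* Γ) (κ : E → ℤ) (hπ : Function.Surjective π)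
variable (hcen : ∀ e : E, π e = 1 → ∀ t : E, e * t = t * e)
variable (hκ : ∀ u v : E, π u = 1 → π v = 1 → κ (u * v) = κ u + κ v)

lemma π_secListProd (L : List Γ) : π ((L.map (sec π hπ)).prod) = L.prod := by
  rw [map_list_prod, List.map_map]
  congr 1
  simp [Function.comp_def, π_sec]

include hcen hκ in
lemma Phi_Tch (L : List Γ) :
    Phi π κ hπ (Tch L) = κ ((L.map (sec π hπ)).prod * (sec π hπ L.prod)⁻¹) := by
  induction L with
  | nil => simp [Tch, sec_one, κ_one π κ hκ]
  | cons g L ih =>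
    rw [Tch, map_add, Phi_single, ih]
    set s := sec π hπ with hs
    set P := (L.map s).prod with hP
    have hv : π (P * (s L.prod)⁻¹) = 1 := by
      simp [hP, hs, π_secListProd, π_sec]
    have hu : π (s g * s L.prod * (s (g * L.prod))⁻¹) = 1 := π_secprod π hπ g L.prod
    rw [coc, ← hs, ← hκ _ _ hu hv]
    have key : s g * s L.prod * (s (g * L.prod))⁻¹ * (P * (s L.prod)⁻¹)
        = s g * P * (s (g * L.prod))⁻¹ := by
      rw [cmove (s g) (s L.prod) (s (g * L.prod)) _ (hcen _ hv)]
      group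
    rw [key, List.map_cons, List.prod_cons, List.prod_cons]

end
end Generic


/-- The lamplighter-like group `(⊕_ℤ ℤ) ⋊ ℤ`. -/
abbrev NN : Type := Multiplicative (ℤ →₀ ℤ)

/-- shift automorphism, moving `single a 1` to `single (a-1) 1`. -/
noncomputable def sigma : MulAut NN :=
  AddEquiv.toMultiplicative (Finsupp.domCongr (Equiv.addLeft (-1 : ℤ)))

lemma sigma_apply_single (a : ℤ) :
    sigma (Multiplicative.ofAdd (Finsupp.single a (1:ℤ)))
      = Multiplicative.ofAdd (Finsupp.single (-1 + a) (1:ℤ)) := by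
  show Multiplicative.ofAdd ((Finsupp.domCongr (Equiv.addLeft (-1 : ℤ)))
    (Finsupp.single a (1:ℤ))) = _
  rw [Finsupp.domCongr_apply, Finsupp.equivMapDomain_single]
  rfl

/-- the action of `ℤ` on `⊕_ℤ ℤ` by shifts -/
noncomputable def phact : Multiplicative ℤ →* MulAut NN := zpowersHom _ sigma

/-- the lamplighter group -/
noncomputable abbrev Lam : Type := NN ⋊[phact] Multiplicative ℤ

/-- the map from the free group on x, y to the lamplighter group;
`x ↦ shift generator`, `y ↦ single 0 1`. -/
noncomputable def theta : A →* Lam :=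
  FreeGroup.lift
    ![SemidirectProduct.inr (Multiplicative.ofAdd 1),
      SemidirectProduct.inl (Multiplicative.ofAdd (Finsupp.single 0 1))]

lemma sigma_zpow_single (k a : ℤ) :
    (sigma ^ k) (Multiplicative.ofAdd (Finsupp.single a (1:ℤ)))
      = Multiplicative.ofAdd (Finsupp.single (a - k) (1:ℤ)) := by
  induction k using Int.induction_on generalizing a with
  | zero => simp
  | succ n ih =>
    have : sigma ^ ((n : ℤ) + 1) = sigma ^ (n : ℤ) * sigma := by
      rw [zpow_add, zpow_one]
    rw [this, MulAut.mul_apply, sigma_apply_single, ih (-1 + a)]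
    congr 2
    ring
  | pred n ih =>
    have h : sigma ^ ((-n : ℤ) - 1) = sigma ^ (-n : ℤ) * sigma⁻¹ := by
      rw [zpow_sub, zpow_one]
    have hinv : sigma⁻¹ (Multiplicative.ofAdd (Finsupp.single a (1:ℤ)))
        = Multiplicative.ofAdd (Finsupp.single (1 + a) (1:ℤ)) := by
      have := sigma_apply_single (1 + a)
      rw [show -1 + (1 + a) = a by ring] at this
      rw [← this]
      simp
    rw [h, MulAut.mul_apply, hinv, ih (1 + a)]
    congr 2
    ring

lemma theta_x : theta (FreeGroup.of 0) = SemidirectProduct.inr (Multiplicative.ofAdd 1) := by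
  simp [theta]

lemma theta_y : theta (FreeGroup.of 1)
    = SemidirectProduct.inl (Multiplicative.ofAdd (Finsupp.single 0 1)) := by
  simp [theta]

/-- projection to the `ℤ` factor -/
noncomputable def px : A →* Multiplicative ℤ := SemidirectProduct.rightHom.comp theta

lemma C_le_ker : C ≤ px.ker := by
  apply Subgroup.normalClosure_le_normal
  intro a ha
  simp only [Set.mem_singleton_iff] at ha
  subst ha
  simp [px, MonoidHom.mem_ker, theta_y]

lemma theta_right_eq_one {c : A} (hc : c ∈ C) : (theta c).right = 1 := C_le_ker hc

/-- the homomorphism `C →* ⊕_ℤ ℤ` reading off the "lamp configuration" -/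
noncomputable def Fc : C →* NN where
  toFun c := (theta c.val).left
  map_one' := by simp
  map_mul' c d := by
    show (theta ((c * d : C) : A)).left = (theta c.val).left * (theta d.val).left
    rw [show ((c * d : C) : A) = (c : A) * (d : A) from rfl, map_mul,
      SemidirectProduct.mul_left, theta_right_eq_one c.2, map_one, MulAut.one_apply]

/-- the family of homomorphisms `C →* ℤ` detecting the lamp at position `j` -/
noncomputable def fj (j : ℤ) : C →* Multiplicative ℤ :=
  (AddMonoidHom.toMultiplicative (Finsupp.applyAddHom j)).comp Fc

/-- the elements `x^{-i} y x^i y^{-1}` of `C` -/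
noncomputable def va (i : ℕ) : A :=
  ((FreeGroup.of 0)⁻¹)^i * FreeGroup.of 1 * (FreeGroup.of 0)^i * (FreeGroup.of 1)⁻¹

lemma va_mem (i : ℕ) : va i ∈ C := by
  have hy : FreeGroup.of 1 ∈ C := Subgroup.subset_normalClosure rfl
  have hN : (Subgroup.normalClosure {FreeGroup.of (1 : Fin 2)}).Normal :=
    Subgroup.normalClosure_normal
  have h1 : ((FreeGroup.of 0)⁻¹)^i * FreeGroup.of 1 * (FreeGroup.of 0)^i ∈ C := by
    have := hN.conj_mem _ hy ((FreeGroup.of 0)^i)⁻¹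
    simpa [inv_pow, C] using this
  exact mul_mem h1 (inv_mem hy)

lemma theta_va (i : ℕ) :
    theta (va i) = SemidirectProduct.inl
      (Multiplicative.ofAdd (Finsupp.single (i : ℤ) (1:ℤ) - Finsupp.single 0 1)) := by
  have hx : theta ((FreeGroup.of 0)⁻¹^i)
      = SemidirectProduct.inr (Multiplicative.ofAdd (-(i:ℤ))) := by
    rw [map_pow, map_inv, theta_x, ← map_inv, ← map_pow]
    congr 1
    rw [← ofAdd_neg]
    rw [← ofAdd_nsmul]
    congr 1
    simp
  have hxi : theta ((FreeGroup.of 0)^i)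
      = SemidirectProduct.inr (Multiplicative.ofAdd ((i:ℤ))) := by
    rw [map_pow, theta_x, ← map_pow, ← ofAdd_nsmul]
    congr 1
    simp
  have key : SemidirectProduct.inr (Multiplicative.ofAdd (-(i:ℤ)))
        * SemidirectProduct.inl (Multiplicative.ofAdd (Finsupp.single (0:ℤ) (1:ℤ)))
        * SemidirectProduct.inr (Multiplicative.ofAdd ((i:ℤ)))
      = (SemidirectProduct.inl (phact (Multiplicative.ofAdd (-(i:ℤ)))
          (Multiplicative.ofAdd (Finsupp.single (0:ℤ) (1:ℤ)))) : Lam) := by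
    rw [SemidirectProduct.inl_aut]
    congr 1
    rw [← ofAdd_neg, neg_neg]
  have hact : phact (Multiplicative.ofAdd (-(i:ℤ)))
        (Multiplicative.ofAdd (Finsupp.single (0:ℤ) (1:ℤ)))
      = Multiplicative.ofAdd (Finsupp.single ((i:ℤ)) (1:ℤ)) := by
    rw [phact, zpowersHom_apply]
    rw [show (Multiplicative.ofAdd (-(i:ℤ))).toAdd = -(i:ℤ) from rfl]
    rw [sigma_zpow_single]
    congr 1
    congr 1
    ring
  rw [va, map_mul, map_mul, map_mul, hx, hxi, theta_y, map_inv, theta_y, key, hact,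
    ← map_inv, ← map_mul]
  congr 1
  rw [← ofAdd_neg, ← ofAdd_add]
  congr 1
  abel

lemma fj_va (j : ℤ) (i : ℕ) :
    fj j ⟨va i, va_mem i⟩
      = Multiplicative.ofAdd ((Finsupp.single (i:ℤ) (1:ℤ) - Finsupp.single 0 1 : ℤ →₀ ℤ) j) := by
  rw [fj, MonoidHom.comp_apply]
  have h1 : Fc ⟨va i, va_mem i⟩ = Multiplicative.ofAdd
      (Finsupp.single (i : ℤ) (1:ℤ) - Finsupp.single 0 1) := by
    show (theta (va i)).left = _
    rw [theta_va, SemidirectProduct.left_inl]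
  rw [h1]
  rfl

lemma fj_va' (n m : ℕ) :
    (fj ((n:ℤ)+1) ⟨va (m+1), va_mem (m+1)⟩).toAdd = if n = m then 1 else 0 := by
  rw [fj_va]
  rw [toAdd_ofAdd]
  rw [Finsupp.sub_apply, Finsupp.single_apply, Finsupp.single_apply]
  by_cases h : n = m
  · subst h
    rw [if_pos (by push_cast; ring), if_neg (by omega)]
    norm_num
  · rw [if_neg (by omega), if_neg (by omega), if_neg h]
    norm_num

/-! ### The central extensions `EE j` of `DoubleG` -/


open Monoid

/-- the two embeddings `C × ℤ →* A × ℤ` used to build the extension `EE j` -/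
noncomputable def psiE (j : ℤ) : Bool → (C × Multiplicative ℤ →* A × Multiplicative ℤ)
  | true => (C.subtype).prodMap (MonoidHom.id _)
  | false => MonoidHom.prod ((C.subtype).comp (MonoidHom.fst _ _))
      ((MonoidHom.snd _ _) * ((fj j).comp (MonoidHom.fst _ _)))

lemma psiE_true_apply (j : ℤ) (c : C) (n : Multiplicative ℤ) :
    psiE j true (c, n) = ((c : A), n) := rfl

lemma psiE_false_apply (j : ℤ) (c : C) (n : Multiplicative ℤ) :
    psiE j false (c, n) = ((c : A), n * fj j c) := rfl

lemma psiE_inj (j : ℤ) (b : Bool) : Function.Injective (psiE j b) := by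
  cases b
  · rintro ⟨c, n⟩ ⟨c', n'⟩ h
    rw [psiE_false_apply, psiE_false_apply, Prod.ext_iff] at h
    obtain ⟨h1, h2⟩ := h
    have hc : c = c' := Subtype.ext h1
    subst hc
    have : n = n' := mul_right_cancel h2
    rw [this]
  · rintro ⟨c, n⟩ ⟨c', n'⟩ h
    rw [psiE_true_apply, psiE_true_apply, Prod.ext_iff] at h
    exact Prod.ext (Subtype.ext h.1) h.2

/-- the extension group -/
noncomputable abbrev EE (j : ℤ) : Type := Monoid.PushoutI (psiE j)

lemma fst_comp_psiE (j : ℤ) (b : Bool) : (MonoidHom.fst A (Multiplicative ℤ)).comp (psiE j b)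
    = (C.subtype).comp (MonoidHom.fst C (Multiplicative ℤ)) := by
  cases b <;> rfl

lemma piE_compat (j : ℤ) (b : Bool) :
    ((PushoutI.of (φ := fun _ : Bool => C.subtype) b).comp
        (MonoidHom.fst A (Multiplicative ℤ))).comp (psiE j b)
      = (PushoutI.base (fun _ : Bool => C.subtype)).comp
        (MonoidHom.fst C (Multiplicative ℤ)) := by
  rw [MonoidHom.comp_assoc, fst_comp_psiE, ← MonoidHom.comp_assoc, PushoutI.of_comp_eq_base]

/-- the projection `EE j →* DoubleG` -/
noncomputable def piE (j : ℤ) : EE j →* DoubleG :=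
  PushoutI.lift
    (fun b => (PushoutI.of (φ := fun _ : Bool => C.subtype) b).comp
      (MonoidHom.fst A (Multiplicative ℤ)))
    ((PushoutI.base (fun _ : Bool => C.subtype)).comp (MonoidHom.fst C (Multiplicative ℤ)))
    (piE_compat j)

lemma piE_of (j : ℤ) (b : Bool) (a : A) (n : Multiplicative ℤ) :
    piE j (PushoutI.of (φ := psiE j) b (a, n)) = PushoutI.of (φ := fun _ : Bool => C.subtype) b a := by
  rw [piE, PushoutI.lift_of]
  rfl

lemma piE_base (j : ℤ) (c : C) (n : Multiplicative ℤ) :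
    piE j (PushoutI.base (psiE j) (c, n)) = PushoutI.base (fun _ : Bool => C.subtype) c := by
  rw [piE, PushoutI.lift_base]
  rfl

lemma piE_surj (j : ℤ) : Function.Surjective (piE j) := by
  intro g
  induction g using PushoutI.induction_on with
  | of b a => exact ⟨PushoutI.of b (a, 1), piE_of j b a 1⟩
  | base c => exact ⟨PushoutI.base _ (c, 1), piE_base j c 1⟩
  | mul x y hx hy =>
    obtain ⟨x', hx⟩ := hx
    obtain ⟨y', hy⟩ := hy
    exact ⟨x' * y', by rw [map_mul, hx, hy]⟩

/-- the central element generating the kernel of `piE j` -/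
noncomputable def zE (j : ℤ) : EE j :=
  PushoutI.base (psiE j) ((1 : C), Multiplicative.ofAdd (1:ℤ))

lemma zE_def (j : ℤ) : zE j = PushoutI.base (psiE j) ((1 : C), Multiplicative.ofAdd (1:ℤ)) := rfl

lemma zE_of (j : ℤ) (b : Bool) :
    PushoutI.of (φ := psiE j) b ((1 : A), Multiplicative.ofAdd (1:ℤ)) = zE j := by
  cases b
  · have h := PushoutI.of_apply_eq_base (psiE j) false ((1 : C), Multiplicative.ofAdd (1:ℤ))
    rw [psiE_false_apply] at h
    simp only [map_one, mul_one, OneMemClass.coe_one] at h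
    rw [zE_def, ← h]
  · have h := PushoutI.of_apply_eq_base (psiE j) true ((1 : C), Multiplicative.ofAdd (1:ℤ))
    rw [psiE_true_apply] at h
    simp only [OneMemClass.coe_one] at h
    rw [zE_def, ← h]

lemma zE_pow_of (j : ℤ) (b : Bool) (k : ℤ) :
    PushoutI.of (φ := psiE j) b ((1 : A), Multiplicative.ofAdd k) = (zE j) ^ k := by
  rw [← zE_of j b, ← map_zpow]
  congr 1
  ext
  · simp
  · show Multiplicative.ofAdd k = (Multiplicative.ofAdd (1:ℤ)) ^ k
    rw [← ofAdd_zsmul]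
    congr 1
    simp

lemma zE_central (j : ℤ) (t : EE j) : zE j * t = t * zE j := by
  induction t using PushoutI.induction_on with
  | of b a =>
    rw [← zE_of j b, ← map_mul, ← map_mul]
    congr 1
    ext
    · simp
    · rw [Prod.snd_mul, Prod.snd_mul, mul_comm]
  | base h =>
    rw [zE_def, ← map_mul, ← map_mul]
    congr 1
    ext
    · simp
    · rw [Prod.snd_mul, Prod.snd_mul, mul_comm]
  | mul x y hx hy => rw [← mul_assoc, hx, mul_assoc, hy, mul_assoc]

/-- the (central, normal) subgroup generated by `zE j` -/
noncomputable def ZS (j : ℤ) : Subgroup (EE j) := Subgroup.zpowers (zE j)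

lemma ZS_central (j : ℤ) {e : EE j} (he : e ∈ ZS j) (t : EE j) : e * t = t * e := by
  obtain ⟨k, rfl⟩ := Subgroup.mem_zpowers_iff.mp he
  exact ((Commute.zpow_left (zE_central j t) k)).eq

instance ZS_normal (j : ℤ) : (ZS j).Normal := by
  constructor
  intro n hn g
  rw [← ZS_central j hn g, mul_assoc, mul_inv_cancel, mul_one]
  exact hn

lemma piE_zE (j : ℤ) : piE j (zE j) = 1 := by
  rw [zE_def, piE_base]
  exact map_one _

lemma zE_zpow_mem_ker (j : ℤ) (k : ℤ) : (zE j) ^ k ∈ (piE j).ker := by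
  rw [MonoidHom.mem_ker, map_zpow, piE_zE, one_zpow]

lemma of_pair_split (j : ℤ) (b : Bool) (a : A) (n : Multiplicative ℤ) :
    PushoutI.of (φ := psiE j) b (a, n)
      = PushoutI.of (φ := psiE j) b (a, 1) * (zE j) ^ n.toAdd := by
  rw [← zE_pow_of j b, ← map_mul]
  congr 1
  ext
  · simp
  · simp

lemma smap_compat (j : ℤ) (b : Bool) :
    (((QuotientGroup.mk' (ZS j)).comp ((PushoutI.of (φ := psiE j) b).comp
        (MonoidHom.inl A (Multiplicative ℤ)))).comp C.subtype : C →* EE j ⧸ ZS j)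
      = ((QuotientGroup.mk' (ZS j)).comp ((PushoutI.base (psiE j)).comp
        (MonoidHom.inl C (Multiplicative ℤ)))) := by
      apply MonoidHom.ext
      intro c
      show QuotientGroup.mk' (ZS j) (PushoutI.of (φ := psiE j) b ((c : A), 1))
        = QuotientGroup.mk' (ZS j) (PushoutI.base (psiE j) (c, 1))
      cases b
      · have h := PushoutI.of_apply_eq_base (psiE j) false (c, (1 : Multiplicative ℤ))
        rw [psiE_false_apply, one_mul] at h
        have h2 := of_pair_split j false (c : A) (fj j c)
        have h3 : QuotientGroup.mk' (ZS j) ((zE j) ^ (fj j c).toAdd) = 1 :=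
          (QuotientGroup.eq_one_iff _).mpr (Subgroup.zpow_mem (ZS j)
            (Subgroup.mem_zpowers _) _)
        calc QuotientGroup.mk' (ZS j) (PushoutI.of (φ := psiE j) false ((c : A), 1))
            = QuotientGroup.mk' (ZS j) (PushoutI.of (φ := psiE j) false ((c : A), 1))
              * QuotientGroup.mk' (ZS j) ((zE j) ^ (fj j c).toAdd) := by rw [h3, mul_one]
          _ = QuotientGroup.mk' (ZS j) (PushoutI.of (φ := psiE j) false ((c : A), fj j c)) := by
              rw [← map_mul, ← h2]
          _ = QuotientGroup.mk' (ZS j) (PushoutI.base (psiE j) (c, 1)) := by rw [h]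
      · have h := PushoutI.of_apply_eq_base (psiE j) true (c, (1 : Multiplicative ℤ))
        rw [psiE_true_apply] at h
        rw [h]

/-- the retraction of `DoubleG` into `EE j ⧸ ZS j` -/
noncomputable def smap (j : ℤ) : DoubleG →* (EE j ⧸ ZS j) :=
  PushoutI.lift
    (fun b => (QuotientGroup.mk' (ZS j)).comp ((PushoutI.of (φ := psiE j) b).comp
      (MonoidHom.inl A (Multiplicative ℤ))))
    ((QuotientGroup.mk' (ZS j)).comp ((PushoutI.base (psiE j)).comp
      (MonoidHom.inl C (Multiplicative ℤ))))
    (smap_compat j)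

lemma smap_comp_piE (j : ℤ) :
    (smap j).comp (piE j) = QuotientGroup.mk' (ZS j) := by
  apply PushoutI.hom_ext_nonempty
  intro b
  apply MonoidHom.ext
  rintro ⟨a, n⟩
  show smap j (piE j (PushoutI.of (φ := psiE j) b (a, n)))
    = QuotientGroup.mk' (ZS j) (PushoutI.of (φ := psiE j) b (a, n))
  rw [piE_of, smap, PushoutI.lift_of]
  show QuotientGroup.mk' (ZS j) (PushoutI.of (φ := psiE j) b (a, 1)) = _
  rw [of_pair_split j b a n, map_mul]
  have h3 : QuotientGroup.mk' (ZS j) ((zE j) ^ n.toAdd) = 1 :=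
    (QuotientGroup.eq_one_iff _).mpr (Subgroup.zpow_mem (ZS j) (Subgroup.mem_zpowers _) _)
  rw [h3, mul_one]

lemma ker_piE_le (j : ℤ) {e : EE j} (he : e ∈ (piE j).ker) : e ∈ ZS j := by
  have h1 : smap j (piE j e) = QuotientGroup.mk' (ZS j) e :=
    DFunLike.congr_fun (smap_comp_piE j) e
  rw [MonoidHom.mem_ker] at he
  rw [he, map_one] at h1
  have := (QuotientGroup.eq_one_iff e).mp h1.symm
  exact this

lemma kerE_central (j : ℤ) {e : EE j} (he : piE j e = 1) (t : EE j) : e * t = t * e :=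
  ZS_central j (ker_piE_le j (MonoidHom.mem_ker.mpr he)) t

lemma zE_zpow_eq_base (j : ℤ) (m : ℤ) :
    (zE j) ^ m = PushoutI.base (psiE j) ((1 : C), Multiplicative.ofAdd m) := by
  rw [zE_def, ← map_zpow]
  congr 1
  ext
  · simp
  · show ((Multiplicative.ofAdd (1:ℤ)) ^ m) = Multiplicative.ofAdd m
    rw [← ofAdd_zsmul]
    congr 1
    simp

lemma zE_zpow_inj (j : ℤ) : Function.Injective (fun k : ℤ => (zE j) ^ k) := by
  intro k l h
  have h' : (zE j) ^ k = (zE j) ^ l := h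
  rw [zE_zpow_eq_base, zE_zpow_eq_base] at h'
  have h1 := PushoutI.base_injective (psiE_inj j) h'
  have h2 : (Multiplicative.ofAdd k) = (Multiplicative.ofAdd l) := congrArg Prod.snd h1
  exact Multiplicative.ofAdd.injective h2

open scoped Classical in
/-- the "kernel coordinate" function -/
noncomputable def kap (j : ℤ) : EE j → ℤ := fun e =>
  if h : e ∈ (piE j).ker then
    Classical.choose (Subgroup.mem_zpowers_iff.mp (ker_piE_le j h)) else 0

lemma kap_spec (j : ℤ) {e : EE j} (he : e ∈ (piE j).ker) : (zE j) ^ (kap j e) = e := by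
  unfold kap
  rw [dif_pos he]
  exact Classical.choose_spec (Subgroup.mem_zpowers_iff.mp (ker_piE_le j he))

lemma kap_zpow (j : ℤ) (k : ℤ) : kap j ((zE j) ^ k) = k :=
  zE_zpow_inj j (kap_spec j (zE_zpow_mem_ker j k))

lemma kap_mul (j : ℤ) {u v : EE j} (hu : piE j u = 1) (hv : piE j v = 1) :
    kap j (u * v) = kap j u + kap j v := by
  have hu' : u ∈ (piE j).ker := MonoidHom.mem_ker.mpr hu
  have hv' : v ∈ (piE j).ker := MonoidHom.mem_ker.mpr hv
  conv_lhs => rw [← kap_spec j hu', ← kap_spec j hv', ← zpow_add]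
  exact kap_zpow j _

/-! ### The cycles and the pairing computation -/

/-- images of `x` in the two copies -/
noncomputable def xg (b : Bool) : DoubleG :=
  PushoutI.of (φ := fun _ : Bool => C.subtype) b (FreeGroup.of 0)

/-- images of `y` in the two copies -/
noncomputable def yg (b : Bool) : DoubleG :=
  PushoutI.of (φ := fun _ : Bool => C.subtype) b (FreeGroup.of 1)

/-- the word `x^{-i} y x^i y^{-1}` in the copy `b` -/
noncomputable def LA (b : Bool) (i : ℕ) : List DoubleG :=
  List.replicate i (xg b)⁻¹ ++ ([yg b] ++ (List.replicate i (xg b) ++ [(yg b)⁻¹]))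

/-- the common image of `va i` in `DoubleG` -/
noncomputable def wDi (i : ℕ) : DoubleG :=
  PushoutI.of (φ := fun _ : Bool => C.subtype) true (va i)

lemma wD_common (i : ℕ) :
    PushoutI.of (φ := fun _ : Bool => C.subtype) true (va i)
      = PushoutI.of (φ := fun _ : Bool => C.subtype) false (va i) := by
  have h1 := PushoutI.of_apply_eq_base (fun _ : Bool => C.subtype) true ⟨va i, va_mem i⟩
  have h2 := PushoutI.of_apply_eq_base (fun _ : Bool => C.subtype) false ⟨va i, va_mem i⟩
  exact h1.trans h2.symm

lemma LA_prod (b : Bool) (i : ℕ) : (LA b i).prod = wDi i := by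
  have : (LA b i).prod = PushoutI.of (φ := fun _ : Bool => C.subtype) b (va i) := by
    simp only [LA, List.prod_append, List.prod_replicate, List.prod_cons, List.prod_nil, va,
      map_mul, map_pow, map_inv, xg, yg]
    group
  rw [this]
  cases b
  · rw [wDi, wD_common]
  · rfl

/-- the 2-cycle associated to the relation `x^{-i} y x^i y^{-1} = x̄^{-i} ȳ x̄^i ȳ^{-1}` -/
noncomputable def zC (i : ℕ) : (DoubleG × DoubleG) →₀ ℤ :=
  Tch (LA true i) - Tch (LA false i)
    - (i : ℤ) • Finsupp.single (xg true, (xg true)⁻¹) 1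
    - Finsupp.single (yg true, (yg true)⁻¹) 1
    + (i : ℤ) • Finsupp.single (xg false, (xg false)⁻¹) 1
    + Finsupp.single (yg false, (yg false)⁻¹) 1

lemma letters_sum (b : Bool) (i : ℕ) :
    ((LA b i).map fun g => Finsupp.single g (1:ℤ)).sum
      = (i:ℤ) • Finsupp.single (xg b)⁻¹ 1 + Finsupp.single (yg b) 1
        + (i:ℤ) • Finsupp.single (xg b) 1 + Finsupp.single (yg b)⁻¹ 1 := by
  simp only [LA, List.map_append, List.sum_append, List.map_replicate, List.sum_replicate,
    List.map_cons, List.map_nil, List.sum_cons, List.sum_nil, add_zero, natCast_zsmul]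
  abel

lemma zC_cycle (i : ℕ) : barD2 DoubleG (zC i) = 0 := by
  unfold zC
  rw [map_add, map_add, map_sub, map_sub, map_sub, map_smul, map_smul,
    barD2_Tch, barD2_Tch, barD2_single, barD2_single, barD2_single, barD2_single,
    letters_sum, letters_sum, LA_prod, LA_prod, mul_inv_cancel, mul_inv_cancel,
    mul_inv_cancel, mul_inv_cancel]
  simp only [smul_add, smul_sub]
  abel

/-- the pairing functional attached to `j` -/
noncomputable def PhiJ (j : ℤ) : ((DoubleG × DoubleG) →₀ ℤ) →ₗ[ℤ] ℤ :=
  Phi (piE j) (kap j) (piE_surj j)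

lemma hcenJ (j : ℤ) : ∀ e : EE j, piE j e = 1 → ∀ t, e * t = t * e :=
  fun _ he t => kerE_central j he t

lemma hkapJ (j : ℤ) : ∀ u v : EE j, piE j u = 1 → piE j v = 1 →
    kap j (u * v) = kap j u + kap j v := fun _ _ hu hv => kap_mul j hu hv

lemma kap_one (j : ℤ) : kap j (1 : EE j) = 0 := by
  have := kap_zpow j 0
  rwa [zpow_zero] at this

lemma kap_pow (j : ℤ) {u : EE j} (hu : piE j u = 1) (n : ℕ) :
    kap j (u ^ n) = n * kap j u := by
  induction n with
  | zero => simp [kap_one j]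
  | succ n ih =>
    have hun : piE j (u ^ n) = 1 := by rw [map_pow, hu, one_pow]
    rw [pow_succ, hkapJ j _ _ hun hu, ih]
    push_cast
    ring

/-- the section of `piE j` -/
noncomputable def sE (j : ℤ) : DoubleG → EE j := sec (piE j) (piE_surj j)

/-- canonical lifts of the generators -/
noncomputable def XE (j : ℤ) (b : Bool) : EE j :=
  PushoutI.of (φ := psiE j) b (FreeGroup.of 0, 1)

noncomputable def YE (j : ℤ) (b : Bool) : EE j :=
  PushoutI.of (φ := psiE j) b (FreeGroup.of 1, 1)

lemma piE_XE (j : ℤ) (b : Bool) : piE j (XE j b) = xg b := piE_of j b _ _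

lemma piE_YE (j : ℤ) (b : Bool) : piE j (YE j b) = yg b := piE_of j b _ _

/-- error terms of the section at the generators -/
noncomputable def dxE (j : ℤ) (b : Bool) : EE j := (XE j b)⁻¹ * sE j (xg b)
noncomputable def dxE' (j : ℤ) (b : Bool) : EE j := XE j b * sE j ((xg b)⁻¹)
noncomputable def dyE (j : ℤ) (b : Bool) : EE j := (YE j b)⁻¹ * sE j (yg b)
noncomputable def dyE' (j : ℤ) (b : Bool) : EE j := YE j b * sE j ((yg b)⁻¹)

lemma sE_apply (j : ℤ) (g : DoubleG) : piE j (sE j g) = g := π_sec (piE j) (piE_surj j) g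

lemma hdx (j : ℤ) (b : Bool) : piE j (dxE j b) = 1 := by
  rw [dxE, map_mul, map_inv, piE_XE, sE_apply]; group
lemma hdx' (j : ℤ) (b : Bool) : piE j (dxE' j b) = 1 := by
  rw [dxE', map_mul, piE_XE, sE_apply]; group
lemma hdy (j : ℤ) (b : Bool) : piE j (dyE j b) = 1 := by
  rw [dyE, map_mul, map_inv, piE_YE, sE_apply]; group
lemma hdy' (j : ℤ) (b : Bool) : piE j (dyE' j b) = 1 := by
  rw [dyE', map_mul, piE_YE, sE_apply]; group

lemma hsx (j : ℤ) (b : Bool) : sE j (xg b) = XE j b * dxE j b := by rw [dxE]; group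
lemma hsx' (j : ℤ) (b : Bool) : sE j ((xg b)⁻¹) = (XE j b)⁻¹ * dxE' j b := by rw [dxE']; group
lemma hsy (j : ℤ) (b : Bool) : sE j (yg b) = YE j b * dyE j b := by rw [dyE]; group
lemma hsy' (j : ℤ) (b : Bool) : sE j ((yg b)⁻¹) = (YE j b)⁻¹ * dyE' j b := by rw [dyE']; group

/-- the canonical lift of the word `va i` in copy `b` -/
noncomputable def EbE (j : ℤ) (b : Bool) (i : ℕ) : EE j :=
  ((XE j b)⁻¹ ^ i * YE j b) * (XE j b) ^ i * (YE j b)⁻¹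

lemma EbE_eq_of (j : ℤ) (b : Bool) (i : ℕ) :
    EbE j b i = PushoutI.of (φ := psiE j) b (va i, (1 : Multiplicative ℤ)) := by
  rw [EbE, XE, YE, ← map_inv, ← map_pow, ← map_pow, ← map_inv, ← map_mul, ← map_mul, ← map_mul]
  congr 1

lemma piE_EbE (j : ℤ) (b : Bool) (i : ℕ) : piE j (EbE j b i) = wDi i := by
  rw [EbE_eq_of, piE_of]
  cases b
  · rw [wDi, wD_common]
  · rfl

/-- the product of the section over the word equals canonical lift times error -/
lemma map_prod_LA (j : ℤ) (b : Bool) (i : ℕ) :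
    ((LA b i).map (sE j)).prod
      = EbE j b i * (((dxE' j b) ^ i * dyE j b) * (dxE j b) ^ i * dyE' j b) := by
  have hmap : ((LA b i).map (sE j)).prod
      = (sE j ((xg b)⁻¹)) ^ i * sE j (yg b) * (sE j (xg b)) ^ i * sE j ((yg b)⁻¹) := by
    simp only [LA, List.map_append, List.prod_append, List.map_replicate, List.prod_replicate,
      List.map_cons, List.map_nil, List.prod_cons, List.prod_nil, mul_one]
    group
  rw [hmap, hsx, hsx', hsy, hsy']
  have hc1 : ∀ t, (dxE' j b) ^ i * t = t * (dxE' j b) ^ i :=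
    central_pow (hcenJ j _ (hdx' j b)) i
  have hc2 : ∀ t, ((dxE' j b) ^ i * dyE j b) * t = t * ((dxE' j b) ^ i * dyE j b) :=
    central_mul hc1 (hcenJ j _ (hdy j b))
  have hc3 : ∀ t, (((dxE' j b) ^ i * dyE j b) * (dxE j b) ^ i) * t
      = t * (((dxE' j b) ^ i * dyE j b) * (dxE j b) ^ i) :=
    central_mul hc2 (central_pow (hcenJ j _ (hdx j b)) i)
  rw [Commute.mul_pow (show Commute ((XE j b)⁻¹) (dxE' j b) from
      ((hcenJ j _ (hdx' j b)) ((XE j b)⁻¹)).symm),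
    Commute.mul_pow (show Commute (XE j b) (dxE j b) from
      ((hcenJ j _ (hdx j b)) (XE j b)).symm)]
  rw [central_pair hc1, central_pair hc2, central_pair hc3]
  rfl

lemma kap_D (j : ℤ) (b : Bool) (i : ℕ) :
    kap j (((dxE' j b) ^ i * dyE j b) * (dxE j b) ^ i * dyE' j b)
      = (i:ℤ) * kap j (dxE' j b) + kap j (dyE j b) + (i:ℤ) * kap j (dxE j b)
        + kap j (dyE' j b) := by
  have p1 : piE j ((dxE' j b) ^ i) = 1 := by rw [map_pow, hdx', one_pow]
  have p2 : piE j ((dxE' j b) ^ i * dyE j b) = 1 := by rw [map_mul, p1, hdy, one_mul]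
  have p3 : piE j ((dxE j b) ^ i) = 1 := by rw [map_pow, hdx, one_pow]
  have p4 : piE j (((dxE' j b) ^ i * dyE j b) * (dxE j b) ^ i) = 1 := by
    rw [map_mul, p2, p3, one_mul]
  rw [hkapJ j _ _ p4 (hdy' j b), hkapJ j _ _ p2 p3, hkapJ j _ _ p1 (hdy j b),
    kap_pow j (hdx' j b), kap_pow j (hdx j b)]

lemma PhiJ_single_xy (j : ℤ) (b : Bool) :
    PhiJ j (Finsupp.single (xg b, (xg b)⁻¹) 1) = kap j (dxE j b) + kap j (dxE' j b) := by
  rw [PhiJ, Phi_single, coc, mul_inv_cancel, sec_one, inv_one, mul_one]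
  show kap j (sE j (xg b) * sE j ((xg b)⁻¹)) = _
  rw [hsx, hsx', central_pair (hcenJ j _ (hdx j b)), mul_inv_cancel, one_mul]
  exact hkapJ j _ _ (hdx j b) (hdx' j b)

lemma PhiJ_single_yy (j : ℤ) (b : Bool) :
    PhiJ j (Finsupp.single (yg b, (yg b)⁻¹) 1) = kap j (dyE j b) + kap j (dyE' j b) := by
  rw [PhiJ, Phi_single, coc, mul_inv_cancel, sec_one, inv_one, mul_one]
  show kap j (sE j (yg b) * sE j ((yg b)⁻¹)) = _
  rw [hsy, hsy', central_pair (hcenJ j _ (hdy j b)), mul_inv_cancel, one_mul]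
  exact hkapJ j _ _ (hdy j b) (hdy' j b)

lemma PhiJ_Tch_LA (j : ℤ) (b : Bool) (i : ℕ) :
    PhiJ j (Tch (LA b i))
      = kap j (EbE j b i * (sE j (wDi i))⁻¹)
        + ((i:ℤ) * kap j (dxE' j b) + kap j (dyE j b) + (i:ℤ) * kap j (dxE j b)
          + kap j (dyE' j b)) := by
  rw [PhiJ, Phi_Tch _ _ _ (hcenJ j) (hkapJ j), LA_prod, ← sE, map_prod_LA]
  set D := ((dxE' j b) ^ i * dyE j b) * (dxE j b) ^ i * dyE' j b with hD
  have hDker : piE j D = 1 := by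
    rw [hD, map_mul, map_mul, map_mul, map_pow, map_pow, hdx, hdx', hdy, hdy']
    group
  have hDc : ∀ t, D * t = t * D := hcenJ j _ hDker
  have key : EbE j b i * D * (sE j (wDi i))⁻¹ = EbE j b i * (sE j (wDi i))⁻¹ * D :=
    cswap hDc _ _
  have hE : piE j (EbE j b i * (sE j (wDi i))⁻¹) = 1 := by
    rw [map_mul, map_inv, piE_EbE, sE_apply]; group
  rw [key, hkapJ j _ _ hE hDker, kap_D]

/-- the per-side total -/
lemma side_value (j : ℤ) (b : Bool) (i : ℕ) :
    PhiJ j (Tch (LA b i)) - (i:ℤ) * PhiJ j (Finsupp.single (xg b, (xg b)⁻¹) 1)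
        - PhiJ j (Finsupp.single (yg b, (yg b)⁻¹) 1)
      = kap j (EbE j b i * (sE j (wDi i))⁻¹) := by
  rw [PhiJ_Tch_LA, PhiJ_single_xy, PhiJ_single_yy]
  ring

lemma EbE_true_false (j : ℤ) (i : ℕ) :
    EbE j true i = EbE j false i * (zE j) ^ (fj j ⟨va i, va_mem i⟩).toAdd := by
  rw [EbE_eq_of, EbE_eq_of]
  have h1 := PushoutI.of_apply_eq_base (psiE j) true (⟨va i, va_mem i⟩, (1 : Multiplicative ℤ))
  rw [psiE_true_apply] at h1
  have h2 := PushoutI.of_apply_eq_base (psiE j) false (⟨va i, va_mem i⟩, (1 : Multiplicative ℤ))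
  rw [psiE_false_apply, one_mul] at h2
  rw [h1, ← h2, of_pair_split]

lemma kap_diff (j : ℤ) (i : ℕ) :
    kap j (EbE j true i * (sE j (wDi i))⁻¹) - kap j (EbE j false i * (sE j (wDi i))⁻¹)
      = (fj j ⟨va i, va_mem i⟩).toAdd := by
  set m := (fj j ⟨va i, va_mem i⟩).toAdd with hm
  have hzm : ∀ t, (zE j) ^ m * t = t * (zE j) ^ m :=
    fun t => ZS_central j (Subgroup.zpow_mem _ (Subgroup.mem_zpowers _) m) t
  have hsplit : EbE j true i * (sE j (wDi i))⁻¹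
      = ((zE j) ^ m) * (EbE j false i * (sE j (wDi i))⁻¹) := by
    rw [EbE_true_false, ← hm, hzm (EbE j false i * (sE j (wDi i))⁻¹)]
    exact cswap hzm _ _
  have hker1 : piE j ((zE j) ^ m) = 1 := by rw [map_zpow, piE_zE, one_zpow]
  have hker2 : piE j (EbE j false i * (sE j (wDi i))⁻¹) = 1 := by
    rw [map_mul, map_inv, piE_EbE, sE_apply]; group
  rw [hsplit, hkapJ j _ _ hker1 hker2, kap_zpow]
  ring

/-- the main pairing computation -/
lemma PhiJ_zC (j : ℤ) (i : ℕ) :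
    PhiJ j (zC i) = (fj j ⟨va i, va_mem i⟩).toAdd := by
  have expand : PhiJ j (zC i)
      = (PhiJ j (Tch (LA true i)) - (i:ℤ) * PhiJ j (Finsupp.single (xg true, (xg true)⁻¹) 1)
          - PhiJ j (Finsupp.single (yg true, (yg true)⁻¹) 1))
        - (PhiJ j (Tch (LA false i)) - (i:ℤ) * PhiJ j (Finsupp.single (xg false, (xg false)⁻¹) 1)
          - PhiJ j (Finsupp.single (yg false, (yg false)⁻¹) 1)) := by
    rw [zC]
    rw [map_add, map_add, map_sub, map_sub, map_sub, map_smul, map_smul]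
    simp only [smul_eq_mul]
    ring
  rw [expand, side_value, side_value, kap_diff]

/-! ### Final assembly -/


/-- the cycles, as elements of the kernel of `barD2` -/
noncomputable def cyc (n : ℕ) : LinearMap.ker (barD2 DoubleG) :=
  ⟨zC (n+1), LinearMap.mem_ker.mpr (zC_cycle (n+1))⟩

/-- the homology classes of the cycles -/
noncomputable def hcl (n : ℕ) : H2 DoubleG :=
  Submodule.Quotient.mk (cyc n)

lemma PhiJ_zC_nat (n m : ℕ) :
    PhiJ ((n:ℤ)+1) (zC (m+1)) = if n = m then 1 else 0 := by
  rw [PhiJ_zC, fj_va']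

lemma hcl_linearIndependent : LinearIndependent ℤ hcl := by
  rw [linearIndependent_iff]
  intro l hl
  have h1 : Finsupp.linearCombination ℤ hcl l
      = Submodule.mkQ _ (Finsupp.linearCombination ℤ cyc l) := by
    rw [Finsupp.apply_linearCombination]
    rfl
  rw [h1] at hl
  have h2 : Finsupp.linearCombination ℤ cyc l ∈
      Submodule.comap (LinearMap.ker (barD2 DoubleG)).subtype (LinearMap.range (barD3 DoubleG)) := by
    rwa [Submodule.mkQ_apply, Submodule.Quotient.mk_eq_zero] at hl
  rw [Submodule.mem_comap] at h2
  have h3 : (LinearMap.ker (barD2 DoubleG)).subtype (Finsupp.linearCombination ℤ cyc l)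
      = Finsupp.linearCombination ℤ (fun m => zC (m+1)) l := by
    rw [Finsupp.apply_linearCombination]
    rfl
  rw [h3] at h2
  obtain ⟨w, hw⟩ := h2
  ext n
  have h4 : PhiJ ((n:ℤ)+1) (Finsupp.linearCombination ℤ (fun m => zC (m+1)) l) = 0 := by
    rw [← hw]
    exact Phi_barD3 (piE ((n:ℤ)+1)) (kap ((n:ℤ)+1)) (piE_surj ((n:ℤ)+1))
      (hcenJ ((n:ℤ)+1)) (hkapJ ((n:ℤ)+1)) w
  rw [Finsupp.apply_linearCombination] at h4
  rw [Finsupp.linearCombination_apply] at h4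
  simp only [Function.comp] at h4
  have h5 : (l.sum fun m a => a • PhiJ ((n:ℤ)+1) (zC (m+1))) = l n := by
    have : ∀ m a, a • PhiJ ((n:ℤ)+1) (zC (m+1)) = if n = m then a else 0 := by
      intro m a
      rw [PhiJ_zC_nat, smul_eq_mul, mul_ite, mul_one, mul_zero]
    rw [Finsupp.sum, Finset.sum_congr rfl (fun m _ => this m (l m)), Finset.sum_ite_eq]
    by_cases hn : n ∈ l.support
    · rw [if_pos hn]
    · rw [if_neg hn]
      exact (Finsupp.notMem_support_iff.mp hn).symm
  rw [h5] at h4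
  simpa using h4



/-- Let `A` be the free group on `x, y`, let `C` be the normal closure of `y`
in `A`, and let `G` be the double of `A` along `C`. Then the second integral homology group
`H₂(G; ℤ)` is not finitely generated as an abelian group. -/
theorem h2_double_not_fg : ¬ AddGroup.FG (H2 DoubleG) := by
  intro hFG
  haveI : Module.Finite ℤ (H2 DoubleG) := Module.Finite.iff_addGroup_fg.mpr hFG
  exact Module.Finite.not_linearIndependent_of_infinite hcl hcl_linearIndependent
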